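/- Let n ≥ 3 and k_φ > 0, f > 0. Let C be the n×n real circulant matrix with entries C_{i,i+1 mod n} = C_{i,i−1 mod n} = 1/2 and all other entries 0, and D the n×n real circulant matrix with D_{i,i+1 mod n} = 1/2, D_{i,i−1 mod n} = −1/2, other entries 0. Then for every x ∈ ℝⁿ, exp(t·(k_φ(C − I) + f·D))·x converges, as t → ∞, to ((Σ_{i=1}^n x_i)/n)·𝟙, where 𝟙 is the all-ones vector. In particular, if Σ_i x_i = 0 then exp(t(k_φ(C − I) + f D))·x → 0. -/

import Mathlib

open Matrix

/-- The `n × n` circulant matrix with first row `(0, 1/2, 0, …, 0, 1/2)`. -/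
noncomputable def ringC (n : ℕ) : Matrix (Fin n) (Fin n) ℝ :=
  Matrix.of fun i j =>
    if ((i : ℕ) + 1) % n = (j : ℕ) ∨ ((j : ℕ) + 1) % n = (i : ℕ) then (1 : ℝ) / 2 else 0

/-- The `n × n` circulant matrix with first row `(0, -1/2, 0, …, 0, 1/2)`. -/
noncomputable def ringD (n : ℕ) : Matrix (Fin n) (Fin n) ℝ :=
  Matrix.of fun i j =>
    if ((i : ℕ) + 1) % n = (j : ℕ) then (1 : ℝ) / 2
    else if ((j : ℕ) + 1) % n = (i : ℕ) then -(1 : ℝ) / 2 else 0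

section helpers
variable {n : ℕ}

lemma val_add_one [NeZero n] (i : Fin n) : ((i + 1 : Fin n) : ℕ) = ((i : ℕ) + 1) % n := by
  rw [Fin.add_def]
  simp [Nat.add_mod]

lemma cond1 [NeZero n] (i j : Fin n) : (((i : ℕ) + 1) % n = (j : ℕ)) ↔ j = i + 1 := by
  rw [Fin.ext_iff, val_add_one]; exact eq_comm

lemma cond2 [NeZero n] (i j : Fin n) : (((j : ℕ) + 1) % n = (i : ℕ)) ↔ j = i - 1 := by
  rw [cond1, eq_sub_iff_add_eq, eq_comm]

end helpers

section helpers2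
variable {n : ℕ}

lemma ne12 [NeZero n] (hn : 3 ≤ n) (i : Fin n) : i + 1 ≠ i - 1 := by
  intro h
  rw [sub_eq_add_neg] at h
  have h1 : (1 : Fin n) = -1 := add_left_cancel h
  have h2 : (1 : Fin n) + 1 = 0 := by nth_rewrite 2 [h1]; exact add_neg_cancel 1
  have := congrArg Fin.val h2
  rw [val_add_one] at this
  have hv1 : ((1 : Fin n) : ℕ) = 1 := by
    have : (1 : ℕ) < n := by omega
    simp [Fin.val_one', Nat.mod_eq_of_lt this]
  rw [hv1] at this
  rw [Nat.mod_eq_of_lt (by omega)] at this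
  simp at this

end helpers2

section mv
variable {n : ℕ} [NeZero n]

lemma ringC_mulVec (hn : 3 ≤ n) (v : Fin n → ℝ) (i : Fin n) :
    (ringC n *ᵥ v) i = (v (i + 1) + v (i - 1)) / 2 := by
  have hne := ne12 hn i
  simp only [ringC, mulVec, dotProduct, of_apply]
  have key : ∀ j : Fin n, (if ((i : ℕ) + 1) % n = (j : ℕ) ∨ ((j : ℕ) + 1) % n = (i : ℕ) then (1:ℝ)/2 else 0) * v j
      = (if j = i + 1 then v j / 2 else 0) + (if j = i - 1 then v j / 2 else 0) := by
    intro j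
    simp only [cond1 i j, cond2 i j]
    by_cases h1 : j = i + 1 <;> by_cases h2 : j = i - 1 <;> simp_all <;> try ring
  simp only [key, Finset.sum_add_distrib, Finset.sum_ite_eq', Finset.mem_univ, if_true]
  ring

lemma ringD_mulVec (hn : 3 ≤ n) (v : Fin n → ℝ) (i : Fin n) :
    (ringD n *ᵥ v) i = (v (i + 1) - v (i - 1)) / 2 := by
  have hne := ne12 hn i
  simp only [ringD, mulVec, dotProduct, of_apply]
  have key : ∀ j : Fin n, (if ((i : ℕ) + 1) % n = (j : ℕ) then (1:ℝ)/2 else if ((j : ℕ) + 1) % n = (i : ℕ) then -(1:ℝ)/2 else 0) * v j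
      = (if j = i + 1 then v j / 2 else 0) + (if j = i - 1 then -(v j) / 2 else 0) := by
    intro j
    simp only [cond1 i j, cond2 i j]
    by_cases h1 : j = i + 1 <;> by_cases h2 : j = i - 1 <;> simp_all <;> try ring
  simp only [key, Finset.sum_add_distrib, Finset.sum_ite_eq', Finset.mem_univ, if_true]
  ring

lemma sum_shift (v : Fin n → ℝ) : ∑ i, v (i + 1) = ∑ i, v i :=
  Fintype.sum_equiv (Equiv.addRight 1) _ _ (fun _ => rfl)

lemma sum_shift' (v : Fin n → ℝ) : ∑ i, v (i - 1) = ∑ i, v i :=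
  Fintype.sum_equiv (Equiv.subRight 1) _ _ (fun _ => rfl)

lemma sum_prod_shift (v : Fin n → ℝ) : ∑ i, v i * v (i - 1) = ∑ i, v (i + 1) * v i :=
  (Fintype.sum_equiv (Equiv.addRight 1) _ _ (fun i => by simp)).symm

end mv

section quad
variable {n : ℕ} [NeZero n]

lemma sum_sq_shift (v : Fin n → ℝ) : ∑ i, v (i + 1) ^ 2 = ∑ i, v i ^ 2 :=
  sum_shift (fun i => v i ^ 2)

lemma sum_C (hn : 3 ≤ n) (v : Fin n → ℝ) : ∑ i, (ringC n *ᵥ v) i = ∑ i, v i := by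
  have h : ∑ i, (ringC n *ᵥ v) i = ∑ i, ((v (i+1) + v (i-1))/2) :=
    Finset.sum_congr rfl fun i _ => by rw [ringC_mulVec hn]
  rw [h, ← Finset.sum_div, Finset.sum_add_distrib, sum_shift, sum_shift']
  ring

lemma sum_D (hn : 3 ≤ n) (v : Fin n → ℝ) : ∑ i, (ringD n *ᵥ v) i = 0 := by
  have h : ∑ i, (ringD n *ᵥ v) i = ∑ i, ((v (i+1) - v (i-1))/2) :=
    Finset.sum_congr rfl fun i _ => by rw [ringD_mulVec hn]
  rw [h, ← Finset.sum_div, Finset.sum_sub_distrib, sum_shift, sum_shift']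
  ring

lemma quad_C (hn : 3 ≤ n) (v : Fin n → ℝ) :
    ∑ i, v i * ((ringC n - 1) *ᵥ v) i = -(1/2) * ∑ i, (v (i + 1) - v i)^2 := by
  have h2 : ∑ i, v i * v (i - 1) = ∑ i, v (i+1) * v i := sum_prod_shift v
  have h1 : ∑ i, v (i+1) ^ 2 = ∑ i, v i ^ 2 := sum_sq_shift v
  have step1 : ∑ i, v i * ((ringC n - 1) *ᵥ v) i
      = ∑ i, (v i * v (i+1) / 2 + v i * v (i-1) / 2 - v i ^ 2) :=
    Finset.sum_congr rfl fun i _ => by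
      rw [sub_mulVec, one_mulVec, Pi.sub_apply, ringC_mulVec hn]; ring
  have step3 : ∑ i, (v (i+1) - v i)^2
      = ∑ i, v (i+1)^2 - 2 * ∑ i, (v (i+1) * v i) + ∑ i, v i ^ 2 := by
    rw [Finset.mul_sum, ← Finset.sum_sub_distrib, ← Finset.sum_add_distrib]
    exact Finset.sum_congr rfl fun i _ => by ring
  have hcomm : (∑ i, v i * v (i+1)) = ∑ i, v (i+1) * v i :=
    Finset.sum_congr rfl fun i _ => mul_comm _ _
  rw [step1, Finset.sum_sub_distrib, Finset.sum_add_distrib, ← Finset.sum_div, ← Finset.sum_div,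
      hcomm, h2, step3, h1]
  ring

lemma quad_D (hn : 3 ≤ n) (v : Fin n → ℝ) : ∑ i, v i * (ringD n *ᵥ v) i = 0 := by
  have h2 : ∑ i, v i * v (i - 1) = ∑ i, v (i+1) * v i := sum_prod_shift v
  have hcomm : (∑ i, v i * v (i+1)) = ∑ i, v (i+1) * v i :=
    Finset.sum_congr rfl fun i _ => mul_comm _ _
  have step1 : ∑ i, v i * (ringD n *ᵥ v) i = ∑ i, (v i * v (i+1) / 2 - v i * v (i-1) / 2) :=
    Finset.sum_congr rfl fun i _ => by rw [ringD_mulVec hn]; ring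
  rw [step1, Finset.sum_sub_distrib, ← Finset.sum_div, ← Finset.sum_div, hcomm, h2, sub_self]

lemma ones_C (hn : 3 ≤ n) : ringC n *ᵥ (fun _ => (1:ℝ)) = fun _ => 1 := by
  funext i; rw [ringC_mulVec hn]; norm_num

lemma ones_D (hn : 3 ≤ n) : ringD n *ᵥ (fun _ => (1:ℝ)) = 0 := by
  funext i; rw [ringD_mulVec hn]; norm_num

end quad

section poincare
variable {n : ℕ} [NeZero n]

open Fin.NatCast in
lemma const_of_shift (v : Fin n → ℝ) (h : ∀ i, v (i + 1) = v i) : ∀ i, v i = v 0 := by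
  have key : ∀ k : ℕ, v ((k : Fin n)) = v 0 := by
    intro k
    induction k with
    | zero => norm_num
    | succ k ih => rw [show ((k + 1 : ℕ) : Fin n) = ((k : ℕ) : Fin n) + 1 by push_cast; ring,
        h ((k : ℕ) : Fin n), ih]
  intro i
  have := key i.val
  rwa [Fin.cast_val_eq_self] at this

lemma poincare (hn : 3 ≤ n) :
    ∃ c : ℝ, 0 < c ∧ ∀ v : Fin n → ℝ, ∑ i, v i = 0 →
      c * ∑ i, v i ^ 2 ≤ ∑ i, (v (i + 1) - v i) ^ 2 := by
  set g : (Fin n → ℝ) → ℝ := fun v => ∑ i, (v (i + 1) - v i) ^ 2 with hg_def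
  set q : (Fin n → ℝ) → ℝ := fun v => ∑ i, v i ^ 2 with hq_def
  have hg : Continuous g := continuous_finset_sum _ fun i _ =>
    ((continuous_apply (i + 1)).sub (continuous_apply i)).pow 2
  have hq : Continuous q := continuous_finset_sum _ fun i _ => (continuous_apply i).pow 2
  have hsum : Continuous fun v : Fin n → ℝ => ∑ i, v i :=
    continuous_finset_sum _ fun i _ => continuous_apply i
  set S : Set (Fin n → ℝ) := {v | q v = 1 ∧ ∑ i, v i = 0} with hS_def
  have hS_closed : IsClosed S :=
    (isClosed_eq hq continuous_const).inter (isClosed_eq hsum continuous_const)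
  have hS_bdd : Bornology.IsBounded S := by
    rw [Metric.isBounded_iff_subset_closedBall 0]
    refine ⟨1, fun v hv => ?_⟩
    rw [Metric.mem_closedBall, dist_zero_right]
    rw [pi_norm_le_iff_of_nonneg zero_le_one]
    intro i
    have h1 : v i ^ 2 ≤ q v := Finset.single_le_sum (f := fun i => v i ^ 2)
      (fun j _ => sq_nonneg _) (Finset.mem_univ i)
    rw [hv.1] at h1
    rw [Real.norm_eq_abs]
    nlinarith [abs_nonneg (v i), sq_abs (v i)]
  have hS_compact : IsCompact S := Metric.isCompact_of_isClosed_isBounded hS_closed hS_bdd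
  -- nonempty
  have h01 : (0 : Fin n) ≠ 1 := by
    intro h
    have := congrArg Fin.val h
    simp [Fin.val_one', Nat.mod_eq_of_lt (show 1 < n by omega)] at this
  have two_sum : ∀ (r s : ℝ), ∑ i : Fin n, (if i = 0 then r else if i = 1 then s else 0) = r + s := by
    intro r s
    have : ∀ i : Fin n, (if i = 0 then r else if i = 1 then s else 0)
        = (if i = 0 then r else 0) + (if i = 1 then s else 0) := by
      intro i
      by_cases h1 : i = 0 <;> by_cases h2 : i = 1 <;> simp_all
    simp only [this, Finset.sum_add_distrib, Finset.sum_ite_eq', Finset.mem_univ, if_true]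
  set a : ℝ := Real.sqrt 2⁻¹ with ha_def
  have ha2 : a ^ 2 = 2⁻¹ := Real.sq_sqrt (by norm_num)
  set v₁ : Fin n → ℝ := fun i => if i = 0 then a else if i = 1 then -a else 0 with hv₁
  have hv₁S : v₁ ∈ S := by
    constructor
    · show (∑ i, v₁ i ^ 2) = 1
      have : ∀ i : Fin n, v₁ i ^ 2 = (if i = 0 then a ^ 2 else if i = 1 then a ^ 2 else 0) := by
        intro i; by_cases h1 : i = 0 <;> by_cases h2 : i = 1 <;> simp_all <;> ring
      rw [Finset.sum_congr rfl fun i _ => this i, two_sum, ha2]; norm_num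
    · show (∑ i, v₁ i) = 0
      rw [hv₁, two_sum]; ring
  obtain ⟨v₀, hv₀S, hmin⟩ := hS_compact.exists_isMinOn ⟨v₁, hv₁S⟩ hg.continuousOn
  refine ⟨g v₀, ?_, ?_⟩
  · rcases (Finset.sum_nonneg fun i (_ : i ∈ Finset.univ) => sq_nonneg (v₀ (i+1) - v₀ i)).lt_or_eq
      with h | h
    · exact h
    · exfalso
      have hzero : ∀ i : Fin n, (v₀ (i + 1) - v₀ i) ^ 2 = 0 := by
        intro i
        have := (Finset.sum_eq_zero_iff_of_nonneg fun j _ => sq_nonneg (v₀ (j+1) - v₀ j)).1 h.symm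
        exact this i (Finset.mem_univ i)
      have hconst : ∀ i, v₀ (i + 1) = v₀ i := fun i => by
        have := hzero i; nlinarith [sq_nonneg (v₀ (i+1) - v₀ i)]
      have hc := const_of_shift v₀ hconst
      have hsum0 : ∑ i, v₀ i = (n : ℝ) * v₀ 0 := by
        rw [Finset.sum_congr rfl fun i _ => hc i]
        simp [Finset.card_univ, mul_comm]
      have h0 : v₀ 0 = 0 := by
        have hn0 : (n : ℝ) ≠ 0 := Nat.cast_ne_zero.2 (by omega)
        have := hv₀S.2
        rw [hsum0] at this
        exact (mul_eq_zero.1 this).resolve_left hn0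
      have : q v₀ = 0 := by
        rw [hq_def]
        exact Finset.sum_eq_zero fun i _ => by rw [hc i, h0]; ring
      rw [hv₀S.1] at this; norm_num at this
  · intro v hv
    rcases eq_or_lt_of_le (Finset.sum_nonneg fun i (_ : i ∈ Finset.univ) => sq_nonneg (v i)) with h | h
    · -- q v = 0 : then v = 0
      have hvz : ∀ i, v i = 0 := by
        intro i
        have := (Finset.sum_eq_zero_iff_of_nonneg fun j _ => sq_nonneg (v j)).1 h.symm i
          (Finset.mem_univ i)
        exact pow_eq_zero_iff (n := 2) (by norm_num) |>.1 this
      have hg0 : g v = 0 := Finset.sum_eq_zero fun i _ => by rw [hvz, hvz]; ring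
      show g v₀ * q v ≤ g v
      rw [hg0]
      have : q v = 0 := by rw [hq_def]; exact h.symm
      rw [this]
      simp
    · set r : ℝ := Real.sqrt (q v) with hr_def
      have hqv : 0 < q v := h
      have hr : 0 < r := Real.sqrt_pos.2 hqv
      have hr2 : r ^ 2 = q v := Real.sq_sqrt hqv.le
      set w : Fin n → ℝ := fun i => v i / r with hw_def
      have hwS : w ∈ S := by
        constructor
        · show (∑ i, w i ^ 2) = 1
          have : ∀ i : Fin n, w i ^ 2 = v i ^ 2 / r ^ 2 := fun i => by rw [hw_def]; ring
          rw [Finset.sum_congr rfl fun i _ => this i, ← Finset.sum_div, hr2]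
          field_simp
          rfl
        · show (∑ i, w i) = 0
          rw [hw_def]
          simp only
          rw [← Finset.sum_div, hv]
          simp
      have hmin' : g v₀ ≤ g w := hmin hwS
      have hgv : g v = r ^ 2 * g w := by
        rw [hg_def, Finset.mul_sum]
        refine Finset.sum_congr rfl fun i _ => ?_
        rw [hw_def]
        field_simp
      show g v₀ * q v ≤ g v
      calc g v₀ * q v = g v₀ * r ^ 2 := by rw [hr2]
        _ ≤ g w * r ^ 2 := by nlinarith
        _ = g v := by rw [hgv]; ring
end poincare

section ode
variable {n : ℕ} [NeZero n]

open NormedSpace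

noncomputable def mulVecCLM (o : Fin n → ℝ) : Matrix (Fin n) (Fin n) ℝ →L[ℝ] (Fin n → ℝ) := by
  letI : NormedRing (Matrix (Fin n) (Fin n) ℝ) := Matrix.linftyOpNormedRing
  letI : NormedAlgebra ℝ (Matrix (Fin n) (Fin n) ℝ) := Matrix.linftyOpNormedAlgebra
  exact LinearMap.toContinuousLinearMap
    { toFun := fun M => M *ᵥ o
      map_add' := fun M N => Matrix.add_mulVec M N o
      map_smul' := fun c M => Matrix.smul_mulVec c M o }

lemma mulVecCLM_apply (o : Fin n → ℝ) (M : Matrix (Fin n) (Fin n) ℝ) :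
    mulVecCLM o M = M *ᵥ o := rfl

lemma exp_mulVec_kill (M : Matrix (Fin n) (Fin n) ℝ) (o : Fin n → ℝ) (h : M *ᵥ o = 0) :
    exp M *ᵥ o = o := by
  letI : NormedRing (Matrix (Fin n) (Fin n) ℝ) := Matrix.linftyOpNormedRing
  letI : NormedAlgebra ℝ (Matrix (Fin n) (Fin n) ℝ) := Matrix.linftyOpNormedAlgebra
  have hs : Summable fun k : ℕ => ((k.factorial : ℝ))⁻¹ • M ^ k := expSeries_summable' M
  have hmap := hs.map_tsum (mulVecCLM o).toLinearMap.toAddMonoidHom (mulVecCLM o).continuous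
  have : exp M *ᵥ o = ∑' k : ℕ, ((k.factorial : ℝ))⁻¹ • (M ^ k *ᵥ o) := by
    rw [exp_eq_tsum (𝕂 := ℝ)]
    simpa [mulVecCLM_apply, Matrix.smul_mulVec] using hmap
  rw [this]
  have hterm : ∀ k : ℕ, ((k.factorial : ℝ))⁻¹ • (M ^ k *ᵥ o)
      = if k = 0 then o else 0 := by
    intro k
    cases k with
    | zero => simp [Matrix.one_mulVec]
    | succ k =>
      have : M ^ (k + 1) *ᵥ o = 0 := by
        rw [pow_succ, ← Matrix.mulVec_mulVec, h, Matrix.mulVec_zero]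
      simp [this]
  rw [tsum_congr hterm, tsum_eq_single 0 (fun k hk => by simp [hk])]
  simp

lemma hasDerivAt_flow (A : Matrix (Fin n) (Fin n) ℝ) (y : Fin n → ℝ) (t : ℝ) :
    HasDerivAt (fun s : ℝ => exp (s • A) *ᵥ y)
      (A *ᵥ (exp (t • A) *ᵥ y)) t := by
  letI : NormedRing (Matrix (Fin n) (Fin n) ℝ) := Matrix.linftyOpNormedRing
  letI : NormedAlgebra ℝ (Matrix (Fin n) (Fin n) ℝ) := Matrix.linftyOpNormedAlgebra
  have h1 := hasDerivAt_exp_smul_const' A t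
  have h2 := (mulVecCLM y).hasFDerivAt.comp_hasDerivAt t h1
  have h3 : mulVecCLM y (A * exp (t • A)) = A *ᵥ (exp (t • A) *ᵥ y) := by
    rw [mulVecCLM_apply, ← Matrix.mulVec_mulVec]
  rw [← h3]
  exact h2

end ode

/-- Convergence of the Controller–2 error flow: `exp(t (k_φ (C-I) + f D)) x` converges to
`((∑ᵢ xᵢ)/n) 𝟙`; in particular to `0` when `∑ᵢ xᵢ = 0`. -/
theorem stmt_7 (n : ℕ) (hn : 3 ≤ n) (kφ f : ℝ) (hkφ : 0 < kφ) (hf : 0 < f)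
    (x : Fin n → ℝ) :
    Filter.Tendsto
      (fun t : ℝ => NormedSpace.exp (t • (kφ • (ringC n - 1) + f • ringD n)) *ᵥ x)
      Filter.atTop (nhds (((∑ i, x i) / n) • fun _ => (1 : ℝ))) ∧
    ((∑ i, x i) = 0 →
      Filter.Tendsto
        (fun t : ℝ => NormedSpace.exp (t • (kφ • (ringC n - 1) + f • ringD n)) *ᵥ x)
        Filter.atTop (nhds 0)) := by
  haveI : NeZero n := ⟨by omega⟩
  obtain ⟨c, hc, hpoin⟩ := poincare (n := n) hn
  set A : Matrix (Fin n) (Fin n) ℝ := kφ • (ringC n - 1) + f • ringD n with hA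
  have hAmv : ∀ v : Fin n → ℝ, A *ᵥ v = kφ • ((ringC n - 1) *ᵥ v) + f • (ringD n *ᵥ v) := by
    intro v
    rw [hA, Matrix.add_mulVec, Matrix.smul_mulVec, Matrix.smul_mulVec]
  set o : Fin n → ℝ := fun _ => (1 : ℝ) with ho
  have hones : A *ᵥ o = 0 := by
    rw [hAmv]
    have h1 : (ringC n - 1) *ᵥ o = 0 := by
      rw [Matrix.sub_mulVec, Matrix.one_mulVec, ho, ones_C hn, sub_self]
    rw [h1, ho, ones_D hn]
    simp
  have hsumA : ∀ v : Fin n → ℝ, ∑ i, (A *ᵥ v) i = 0 := by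
    intro v
    have hterm : ∀ i, (A *ᵥ v) i
        = kφ * ((ringC n *ᵥ v) i - v i) + f * (ringD n *ᵥ v) i := by
      intro i
      rw [hAmv, Pi.add_apply, Pi.smul_apply, Pi.smul_apply, Matrix.sub_mulVec,
        Matrix.one_mulVec, Pi.sub_apply, smul_eq_mul, smul_eq_mul]
    rw [Finset.sum_congr rfl fun i _ => hterm i, Finset.sum_add_distrib, ← Finset.mul_sum,
      ← Finset.mul_sum, Finset.sum_sub_distrib, sum_C hn, sum_D hn]
    simp
  have hquadA : ∀ v : Fin n → ℝ, (∑ i, v i) = 0 →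
      ∑ i, v i * (A *ᵥ v) i ≤ -(kφ * c / 2) * ∑ i, v i ^ 2 := by
    intro v hv
    have h1 : ∑ i, v i * (A *ᵥ v) i
        = kφ * (-(1/2) * ∑ i, (v (i + 1) - v i) ^ 2) := by
      have hterm : ∀ i, v i * ((A *ᵥ v) i)
          = kφ * (v i * ((ringC n - 1) *ᵥ v) i) + f * (v i * (ringD n *ᵥ v) i) := by
        intro i
        rw [hAmv, Pi.add_apply, Pi.smul_apply, Pi.smul_apply, smul_eq_mul, smul_eq_mul]
        ring
      rw [Finset.sum_congr rfl fun i _ => hterm i, Finset.sum_add_distrib, ← Finset.mul_sum,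
        ← Finset.mul_sum, quad_C hn, quad_D hn]
      ring
    rw [h1]
    have h2 := hpoin v hv
    nlinarith
  -- decomposition
  set m : ℝ := (∑ i, x i) / n with hm
  set y : Fin n → ℝ := fun i => x i - m with hy
  have hny : (n : ℝ) ≠ 0 := Nat.cast_ne_zero.2 (by omega)
  have hysum : (∑ i, y i) = 0 := by
    rw [hy]
    simp only
    rw [Finset.sum_sub_distrib, Finset.sum_const, Finset.card_univ, Fintype.card_fin,
      nsmul_eq_mul, hm]
    field_simp
    simp
  set u : ℝ → Fin n → ℝ := fun t => NormedSpace.exp (t • A) *ᵥ y with hu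
  have hu' : ∀ t, HasDerivAt u (A *ᵥ u t) t := fun t => hasDerivAt_flow A y t
  have hui' : ∀ (t : ℝ) (i : Fin n), HasDerivAt (fun s => u s i) ((A *ᵥ u t) i) t :=
    fun t i => (hasDerivAt_pi.1 (hu' t)) i
  have hu0 : u 0 = y := by
    rw [hu]
    simp only [zero_smul, NormedSpace.exp_zero, Matrix.one_mulVec]
  -- the sum is conserved and zero
  have hS : ∀ t, (∑ i, u t i) = 0 := by
    have hdiff : ∀ t : ℝ, HasDerivAt (fun s => ∑ i, u s i) 0 t := by
      intro t
      have h := HasDerivAt.fun_sum (fun i (_ : i ∈ Finset.univ) => hui' t i)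
      rwa [hsumA (u t)] at h
    intro t
    have hconst : (∑ i, u t i) = ∑ i, u 0 i :=
      is_const_of_deriv_eq_zero (fun s => (hdiff s).differentiableAt)
        (fun s => (hdiff s).deriv) t 0
    rw [hconst, hu0, hysum]
  -- energy
  set φ : ℝ → ℝ := fun t => ∑ i, u t i ^ 2 with hφ
  set φd : ℝ → ℝ := fun t => ∑ i, (2 : ℝ) * u t i ^ 1 * (A *ᵥ u t) i with hφd
  have hφ' : ∀ t, HasDerivAt φ (φd t) t := fun t =>
    HasDerivAt.fun_sum (fun i (_ : i ∈ Finset.univ) => (hui' t i).pow 2)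
  have hφnonneg : ∀ t, 0 ≤ φ t := fun t =>
    Finset.sum_nonneg fun i _ => sq_nonneg (u t i)
  set ε : ℝ := kφ * c with hε
  have hεpos : 0 < ε := mul_pos hkφ hc
  have hφd_le : ∀ t, φd t ≤ -ε * φ t := by
    intro t
    have h1 : φd t = 2 * ∑ i, u t i * (A *ᵥ u t) i := by
      rw [hφd, Finset.mul_sum]
      exact Finset.sum_congr rfl fun i _ => by ring
    have h2 := hquadA (u t) (hS t)
    rw [h1]
    show 2 * (∑ i, u t i * (A *ᵥ u t) i) ≤ -ε * ∑ i, u t i ^ 2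
    linarith
  -- Gronwall
  set ψ : ℝ → ℝ := fun t => Real.exp (ε * t) * φ t with hψ
  have hψ' : ∀ t, HasDerivAt ψ (Real.exp (ε * t) * ε * φ t + Real.exp (ε * t) * φd t) t := by
    intro t
    have hexp : HasDerivAt (fun s : ℝ => Real.exp (ε * s)) (Real.exp (ε * t) * ε) t := by
      have hlin : HasDerivAt (fun s : ℝ => ε * s) ε t := by
        simpa using (hasDerivAt_id t).const_mul ε
      exact (Real.hasDerivAt_exp (ε * t)).comp t hlin
    exact hexp.mul (hφ' t)
  have hψanti : Antitone ψ := by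
    apply antitone_of_hasDerivAt_nonpos
      (f' := fun t => Real.exp (ε * t) * ε * φ t + Real.exp (ε * t) * φd t) hψ'
    intro t
    have h1 := hφd_le t
    have h2 := Real.exp_pos (ε * t)
    have h4 : ε * φ t + φd t ≤ 0 := by linarith
    calc Real.exp (ε * t) * ε * φ t + Real.exp (ε * t) * φd t
        = Real.exp (ε * t) * (ε * φ t + φd t) := by ring
      _ ≤ Real.exp (ε * t) * 0 := mul_le_mul_of_nonneg_left h4 h2.le
      _ = 0 := mul_zero _
  have hφbound : ∀ t : ℝ, 0 ≤ t → φ t ≤ Real.exp (-(ε * t)) * φ 0 := by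
    intro t ht
    have h1 : ψ t ≤ ψ 0 := hψanti ht
    have h2 : ψ 0 = φ 0 := by rw [hψ]; simp
    have h3 : Real.exp (-(ε * t)) * Real.exp (ε * t) = 1 := by
      rw [← Real.exp_add]; simp
    have h4 : Real.exp (ε * t) * φ t ≤ φ 0 := by rw [← h2]; exact h1
    have h5 := Real.exp_pos (-(ε * t))
    have h6 : φ t = Real.exp (-(ε * t)) * (Real.exp (ε * t) * φ t) := by
      rw [← mul_assoc, h3, one_mul]
    rw [h6]
    exact mul_le_mul_of_nonneg_left h4 h5.le
  have hφtend : Filter.Tendsto φ Filter.atTop (nhds 0) := by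
    have hg : Filter.Tendsto (fun t : ℝ => Real.exp (-(ε * t)) * φ 0)
        Filter.atTop (nhds 0) := by
      have h1 : Filter.Tendsto (fun t : ℝ => -(ε * t)) Filter.atTop Filter.atBot := by
        apply Filter.tendsto_neg_atBot_iff.2
        exact Filter.Tendsto.const_mul_atTop hεpos Filter.tendsto_id
      have h2 := (Real.tendsto_exp_atBot).comp h1
      have := h2.mul_const (φ 0)
      simpa using this
    apply squeeze_zero' (Filter.Eventually.of_forall hφnonneg) ?_ hg
    filter_upwards [Filter.eventually_ge_atTop (0 : ℝ)] with t ht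
    exact hφbound t ht
  have hucoord : ∀ i : Fin n, Filter.Tendsto (fun t => u t i) Filter.atTop (nhds 0) := by
    intro i
    have hsq : Filter.Tendsto (fun t => u t i ^ 2) Filter.atTop (nhds 0) := by
      apply squeeze_zero (fun t => sq_nonneg _) ?_ hφtend
      intro t
      exact Finset.single_le_sum (f := fun j => u t j ^ 2) (fun j _ => sq_nonneg _)
        (Finset.mem_univ i)
    have habs : Filter.Tendsto (fun t => |u t i|) Filter.atTop (nhds 0) := by
      have h := (Real.continuous_sqrt.tendsto 0).comp hsq
      rw [Real.sqrt_zero] at h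
      have heq : (Real.sqrt ∘ fun t => u t i ^ 2) = fun t => |u t i| := by
        funext t
        simp [Function.comp, Real.sqrt_sq_eq_abs]
      rwa [heq] at h
    have hneg : Filter.Tendsto (fun t => -|u t i|) Filter.atTop (nhds 0) := by
      simpa using habs.neg
    exact tendsto_of_tendsto_of_tendsto_of_le_of_le hneg habs
      (fun t => neg_abs_le _) (fun t => le_abs_self _)
  have hutend : Filter.Tendsto u Filter.atTop (nhds 0) :=
    tendsto_pi_nhds.2 fun i => by simpa using hucoord i
  -- decomposition of the flow
  have hkey : ∀ t : ℝ, NormedSpace.exp (t • A) *ᵥ x = u t + m • o := by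
    intro t
    have hxdecomp : x = y + m • o := by
      funext i
      rw [hy]
      simp [ho]
    have hfix : NormedSpace.exp (t • A) *ᵥ o = o := by
      apply exp_mulVec_kill
      rw [Matrix.smul_mulVec, hones, smul_zero]
    rw [hxdecomp, Matrix.mulVec_add, Matrix.mulVec_smul, hfix, hu]
  have hmain : Filter.Tendsto (fun t : ℝ => NormedSpace.exp (t • A) *ᵥ x)
      Filter.atTop (nhds (m • o)) := by
    have h1 : Filter.Tendsto (fun t => u t + m • o) Filter.atTop (nhds (0 + m • o)) :=
      hutend.add tendsto_const_nhds
    rw [zero_add] at h1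
    simpa [hkey] using h1
  constructor
  · exact hmain
  · intro hx0
    have hm0 : m = 0 := by rw [hm, hx0, zero_div]
    have : m • o = 0 := by rw [hm0, zero_smul]
    rwa [this] at hmain
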